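/- Let π be a permutation of [n] with Grassmann necklace N(π). An r-element subset Y of [n] belongs to Int(N(π)) if and only if Y is a π-chamber set. -/
import Mathlib


open Finset

variable {n : ℕ}

/-- Position of `x` in the cyclic order on `Fin n` starting at `i`. -/
def cpos (i x : Fin n) : ℕ := ((x - i : Fin n) : ℕ)

/-- `X ≪_i Y`: every element of `X \\ Y` precedes every element of `Y \\ X`
in the cyclic order starting at `i`. -/
def Ll (i : Fin n) (X Y : Finset (Fin n)) : Prop :=
  ∀ x ∈ X \ Y, ∀ y ∈ Y \ X, cpos i x < cpos i y

/-- `X` and `Y` are weakly separated. -/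
def WSep (X Y : Finset (Fin n)) : Prop := ∃ i : Fin n, Ll i X Y

/-- The Grassmann necklace associated with a permutation `π`:
`N_i = { k : k ≤_i π⁻¹(k) }`. -/
def necklaceOf (π : Equiv.Perm (Fin n)) (i : Fin n) : Finset (Fin n) :=
  Finset.univ.filter fun k => cpos i k ≤ cpos i (π.symm k)

/-- `(i, j)` is an alignment of `π`: the quadruple `π⁻¹(i), i, j, π⁻¹(j)`
occurs in this cyclic order (`j = π(j)` allowed, `i = π(i)` not). -/
def IsAlignment (π : Equiv.Perm (Fin n)) (i j : Fin n) : Prop :=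
  0 < cpos (π.symm i) i ∧
  cpos (π.symm i) i < cpos (π.symm i) j ∧
  cpos (π.symm i) j ≤ cpos (π.symm i) (π.symm j)

/-- The interior of a necklace `N`: `r`-sets `X` with `N_i ≪_i X` for all `i`. -/
def Interior (r : ℕ) (N : Fin n → Finset (Fin n)) : Set (Finset (Fin n)) :=
  {X | X.card = r ∧ ∀ i, Ll i (N i) X}

lemma fin_sub_val (u v : Fin n) (h : v.val ≤ u.val) :
    ((u - v : Fin n) : ℕ) = u.val - v.val := by
  have hn : 0 < n := v.pos
  have hu := u.isLt
  rw [Fin.sub_def]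
  show (n - v.val + u.val) % n = u.val - v.val
  have e : n - v.val + u.val = (u.val - v.val) + n := by omega
  rw [e, Nat.add_mod_right, Nat.mod_eq_of_lt (by omega)]

/-- Base-point change for `cpos`. -/
lemma cpos_trans (i a z : Fin n) (h : cpos i a ≤ cpos i z) :
    cpos a z = cpos i z - cpos i a := by
  haveI : NeZero n := ⟨i.pos.ne'⟩
  have e : z - a = (z - i) - (a - i) := by
    rw [sub_sub_sub_cancel_right]
  unfold cpos at *
  rw [e, fin_sub_val _ _ h]

lemma cpos_inj (i : Fin n) {x y : Fin n} (h : cpos i x = cpos i y) : x = y := by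
  haveI : NeZero n := ⟨i.pos.ne'⟩
  have : x - i = y - i := Fin.val_injective h
  exact sub_left_injective this

lemma cpos_self (i : Fin n) : cpos i i = 0 := by
  haveI : NeZero n := ⟨i.pos.ne'⟩
  simp [cpos]

theorem interior_iff_chamber (π : Equiv.Perm (Fin n)) (r : ℕ)
    (hr : ∀ i, (necklaceOf π i).card = r)
    (Y : Finset (Fin n)) (hYc : Y.card = r) :
    Y ∈ Interior r (necklaceOf π) ↔
      ∀ i j : Fin n, IsAlignment π i j → i ∈ Y → j ∈ Y := by
  constructor
  · rintro ⟨-, hLl⟩ i j ⟨h1, h2, h3⟩ hiY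
    set a := π.symm i with ha
    by_contra hjY
    have h0 := cpos_self a
    have hiN : i ∉ necklaceOf π a := by
      simp only [necklaceOf, mem_filter, mem_univ, true_and, ← ha]
      omega
    have hjN : j ∈ necklaceOf π a := by
      simp only [necklaceOf, mem_filter, mem_univ, true_and, ← ha]
      exact h3
    have := hLl a j (mem_sdiff.mpr ⟨hjN, hjY⟩) i (mem_sdiff.mpr ⟨hiY, hiN⟩)
    omega
  · intro hch
    refine ⟨hYc, fun i x hx y hy => ?_⟩
    obtain ⟨hxN, hxY⟩ := mem_sdiff.mp hx
    obtain ⟨hyY, hyN⟩ := mem_sdiff.mp hy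
    simp only [necklaceOf, mem_filter, mem_univ, true_and] at hxN hyN
    push_neg at hyN
    by_contra hcon
    push_neg at hcon
    have hne : x ≠ y := fun h => hxY (h ▸ hyY)
    have hlt : cpos i y < cpos i x :=
      lt_of_le_of_ne hcon (fun h => hne (cpos_inj i h.symm))
    set a := π.symm y with ha
    have hay : cpos i a < cpos i y := hyN
    have h1 : cpos a y = cpos i y - cpos i a := cpos_trans i a y (le_of_lt hay)
    have h2 : cpos a x = cpos i x - cpos i a := cpos_trans i a x (by omega)
    have h3 : cpos a (π.symm x) = cpos i (π.symm x) - cpos i a :=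
      cpos_trans i a (π.symm x) (by omega)
    have halign : IsAlignment π y x := by
      unfold IsAlignment
      rw [← ha, h1, h2, h3]
      omega
    exact hxY (hch y x halign hyY)
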